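/- (Scalar Student's t ESD filter: one-step Lipschitz bound and exponential stability.) Let ν, ς, η > 0 and φ, ω ∈ ℝ. For y ∈ ℝ define g_y : ℝ → ℝ by g_y(x) := (1 − φ)ω + φ·( x + η·(y − x)·(1 + (y − x)²/(νς²))⁻¹ ). Then for all x, x̃ ∈ ℝ and all y ∈ ℝ, |g_y(x) − g_y(x̃)| ≤ |φ|·max{1 + η/8, η − 1}·|x − x̃|. Consequently, for any data sequence (y_t)_{t≥1}, any two filtered paths θ_{t} = g_{y_t}(θ_{t−1}) and θ̃_{t} = g_{y_t}(θ̃_{t−1}) satisfy |θ_t − θ̃_t| ≤ ( |φ|·max{1 + η/8, η − 1} )^t · |θ₀ − θ̃₀| for all t ≥ 0; in particular, if |φ|·max{1 + η/8, η − 1} < 1, the two paths converge to each other exponentially fast regardless of the starting points and data. -/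

import Mathlib

open Filter

private lemma esd_hasDerivAt (c : ℝ) (hc : 0 < c) (η y x : ℝ) :
    HasDerivAt (fun z => z + η * (y - z) * (1 + (y - z) ^ 2 / c)⁻¹)
      (1 - η * ((1 - (y - x) ^ 2 / c) / (1 + (y - x) ^ 2 / c) ^ 2)) x := by
  have hD : (1 + (y - x) ^ 2 / c) ≠ 0 := by positivity
  have h1 : HasDerivAt (fun z : ℝ => y - z) (-1) x := by
    simpa using (hasDerivAt_id x).const_sub y
  have h2 : HasDerivAt (fun z : ℝ => 1 + (y - z) ^ 2 / c)
      ((2 * (y - x) ^ 1 * (-1)) / c) x :=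
    ((h1.pow 2).div_const c).const_add 1
  have h3 : HasDerivAt (fun z : ℝ => (1 + (y - z) ^ 2 / c)⁻¹)
      (-((2 * (y - x) ^ 1 * (-1)) / c) / (1 + (y - x) ^ 2 / c) ^ 2) x := h2.inv hD
  have h4 : HasDerivAt (fun z : ℝ => η * (y - z)) (η * (-1)) x := h1.const_mul η
  have h5 : HasDerivAt (fun z : ℝ => z + η * (y - z) * (1 + (y - z) ^ 2 / c)⁻¹)
      (1 + (η * -1 * (1 + (y - x) ^ 2 / c)⁻¹
        + η * (y - x) * (-(2 * (y - x) ^ 1 * -1 / c) / (1 + (y - x) ^ 2 / c) ^ 2))) x :=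
    (hasDerivAt_id x).add (h4.mul h3)
  convert h5 using 1
  field_simp
  ring

private lemma esd_deriv_bound (η : ℝ) (hη : 0 < η) (w : ℝ) (hw : 0 ≤ w) :
    |1 - η * ((1 - w) / (1 + w) ^ 2)| ≤ max (1 + η / 8) (η - 1) := by
  have hw1 : (0:ℝ) < (1 + w) ^ 2 := by positivity
  have hr1 : (1 - w) / (1 + w) ^ 2 ≤ 1 := by
    rw [div_le_one hw1]; nlinarith
  have hr2 : -(1/8 : ℝ) ≤ (1 - w) / (1 + w) ^ 2 := by
    rw [le_div_iff₀ hw1]; nlinarith [sq_nonneg (w - 3)]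
  have hK1 : (1 + η / 8) ≤ max (1 + η / 8) (η - 1) := le_max_left _ _
  have hK2 : (η - 1) ≤ max (1 + η / 8) (η - 1) := le_max_right _ _
  rw [abs_le]
  constructor
  · nlinarith
  · nlinarith

theorem student_t_esd_stability (ν ς η : ℝ) (hν : 0 < ν) (hς : 0 < ς) (hη : 0 < η)
    (φ ω : ℝ) :
    (∀ y x x' : ℝ,
        |((1 - φ) * ω + φ * (x + η * (y - x) * (1 + (y - x) ^ 2 / (ν * ς ^ 2))⁻¹))
            - ((1 - φ) * ω + φ * (x' + η * (y - x') * (1 + (y - x') ^ 2 / (ν * ς ^ 2))⁻¹))|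
          ≤ |φ| * max (1 + η / 8) (η - 1) * |x - x'|) ∧
      ∀ (ydata θ θ' : ℕ → ℝ),
        (∀ t : ℕ, θ (t + 1) = (1 - φ) * ω
            + φ * (θ t + η * (ydata (t + 1) - θ t)
                * (1 + (ydata (t + 1) - θ t) ^ 2 / (ν * ς ^ 2))⁻¹)) →
        (∀ t : ℕ, θ' (t + 1) = (1 - φ) * ω
            + φ * (θ' t + η * (ydata (t + 1) - θ' t)
                * (1 + (ydata (t + 1) - θ' t) ^ 2 / (ν * ς ^ 2))⁻¹)) →
        (∀ t : ℕ, |θ t - θ' t| ≤ (|φ| * max (1 + η / 8) (η - 1)) ^ t * |θ 0 - θ' 0|) ∧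
          (|φ| * max (1 + η / 8) (η - 1) < 1 →
            Tendsto (fun t => |θ t - θ' t|) atTop (nhds 0)) := by
  set c : ℝ := ν * ς ^ 2 with hc_def
  have hc : 0 < c := by positivity
  set K : ℝ := max (1 + η / 8) (η - 1) with hK_def
  have hK0 : 0 ≤ K := le_trans (by positivity) (le_max_left _ _)
  -- one-step Lipschitz bound for inner map h
  have key : ∀ y x x' : ℝ,
      |(x + η * (y - x) * (1 + (y - x) ^ 2 / c)⁻¹)
        - (x' + η * (y - x') * (1 + (y - x') ^ 2 / c)⁻¹)| ≤ K * |x - x'| := by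
    intro y x x'
    have := Convex.norm_image_sub_le_of_norm_hasDerivWithin_le
      (f := fun z => z + η * (y - z) * (1 + (y - z) ^ 2 / c)⁻¹)
      (f' := fun z => 1 - η * ((1 - (y - z) ^ 2 / c) / (1 + (y - z) ^ 2 / c) ^ 2))
      (C := K) (s := Set.univ)
      (fun z _ => (esd_hasDerivAt c hc η y z).hasDerivWithinAt)
      (fun z _ => by
        have hwz : 0 ≤ (y - z) ^ 2 / c := by positivity
        simp only [Real.norm_eq_abs, hK_def]
        exact esd_deriv_bound η hη ((y - z) ^ 2 / c) hwz)
      convex_univ (Set.mem_univ x') (Set.mem_univ x)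
    simpa [Real.norm_eq_abs] using this
  have lip : ∀ y x x' : ℝ,
      |((1 - φ) * ω + φ * (x + η * (y - x) * (1 + (y - x) ^ 2 / c)⁻¹))
          - ((1 - φ) * ω + φ * (x' + η * (y - x') * (1 + (y - x') ^ 2 / c)⁻¹))|
        ≤ |φ| * K * |x - x'| := by
    intro y x x'
    have h1 : ((1 - φ) * ω + φ * (x + η * (y - x) * (1 + (y - x) ^ 2 / c)⁻¹))
        - ((1 - φ) * ω + φ * (x' + η * (y - x') * (1 + (y - x') ^ 2 / c)⁻¹))
        = φ * ((x + η * (y - x) * (1 + (y - x) ^ 2 / c)⁻¹)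
          - (x' + η * (y - x') * (1 + (y - x') ^ 2 / c)⁻¹)) := by ring
    rw [h1, abs_mul]
    exact le_trans (mul_le_mul_of_nonneg_left (key y x x') (abs_nonneg φ))
      (le_of_eq (mul_assoc _ _ _).symm)
  refine ⟨lip, ?_⟩
  intro ydata θ θ' hθ hθ'
  have hr0 : 0 ≤ |φ| * K := mul_nonneg (abs_nonneg φ) hK0
  have hbound : ∀ t : ℕ, |θ t - θ' t| ≤ (|φ| * K) ^ t * |θ 0 - θ' 0| := by
    intro t
    induction t with
    | zero => simp
    | succ n ih =>
      calc |θ (n + 1) - θ' (n + 1)| ≤ |φ| * K * |θ n - θ' n| := by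
            rw [hθ n, hθ' n]; exact lip (ydata (n + 1)) (θ n) (θ' n)
        _ ≤ |φ| * K * ((|φ| * K) ^ n * |θ 0 - θ' 0|) :=
            mul_le_mul_of_nonneg_left ih hr0
        _ = (|φ| * K) ^ (n + 1) * |θ 0 - θ' 0| := by ring
  refine ⟨hbound, fun hr1 => ?_⟩
  have htend : Tendsto (fun t : ℕ => (|φ| * K) ^ t * |θ 0 - θ' 0|) atTop (nhds 0) := by
    simpa using (tendsto_pow_atTop_nhds_zero_of_lt_one hr0 hr1).mul_const |θ 0 - θ' 0|
  exact squeeze_zero (fun t => abs_nonneg _) hbound htend
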